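/- Let K be a field of characteristic 0, r ≥ 1, and let A be a commutative K-algebra graded by ℤ^r, i.e. A = ⊕_{m∈ℤ^r} A_m with A_m·A_{m'} ⊂ A_{m+m'}. Let δ be a locally finite K-derivation of A which decomposes as a finite sum δ = Σ_{χ∈S} δ_χ over a finite set S ⊂ ℤ^r, where each δ_χ is a nonzero derivation homogeneous of degree χ (i.e. δ_χ(A_m) ⊂ A_{m+χ} for all m). If v ∈ S is an extreme point (vertex) of the convex hull of S in ℚ^r and v ≠ 0, then δ_v is locally nilpotent. -/

import Mathlib

open Module in
lemma aux_rat_span {ι : Type*} [Fintype ι] (u : Finset (ι → ℚ)) (x : ι → ℚ)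
    (h : (fun i => (x i : ℝ)) ∈ Submodule.span ℝ
      ((fun (q : ι → ℚ) (i : ι) => (q i : ℝ)) '' (u : Set (ι → ℚ)))) :
    x ∈ Submodule.span ℚ (u : Set (ι → ℚ)) := by
  classical
  by_contra hx
  obtain ⟨f, hfx, hfmap⟩ := Submodule.exists_dual_map_eq_bot_of_notMem hx inferInstance
  set g : (ι → ℝ) →ₗ[ℝ] ℝ :=
    ∑ i : ι, ((f fun j => if i = j then (1:ℚ) else 0) : ℝ) • LinearMap.proj i with hg
  have key : ∀ q : ι → ℚ, g (fun i => (q i : ℝ)) = ((f q : ℚ) : ℝ) := by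
    intro q
    rw [LinearMap.pi_apply_eq_sum_univ f q]
    simp only [smul_eq_mul]
    push_cast
    rw [hg]
    simp only [LinearMap.sum_apply, LinearMap.smul_apply, LinearMap.proj_apply,
      smul_eq_mul]
    exact Finset.sum_congr rfl fun i _ => mul_comm _ _
  have hker : Submodule.span ℝ ((fun (q : ι → ℚ) (i : ι) => (q i : ℝ)) '' (u : Set (ι → ℚ)))
      ≤ LinearMap.ker g := by
    rw [Submodule.span_le]
    rintro _ ⟨q, hq, rfl⟩
    have hq0 : f q = 0 := by
      have : f q ∈ (Submodule.span ℚ (u : Set (ι → ℚ))).map f :=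
        Submodule.mem_map_of_mem (Submodule.subset_span hq)
      rw [hfmap] at this
      exact (Submodule.mem_bot ℚ).mp this
    simp [LinearMap.mem_ker, key q, hq0]
  have := hker h
  rw [LinearMap.mem_ker, key x] at this
  exact hfx (by exact_mod_cast this)

lemma aux_hull_transfer {n : ℕ} (Q : Finset (Fin n → ℚ)) (x : Fin n → ℚ)
    (h : x ∉ convexHull ℚ (Q : Set (Fin n → ℚ))) :
    (fun i => (x i : ℝ)) ∉
      convexHull ℝ ((fun (q : Fin n → ℚ) (i : Fin n) => (q i : ℝ)) '' (Q : Set (Fin n → ℚ))) := by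
  classical
  set c : (Fin n → ℚ) → (Fin n → ℝ) := fun q i => (q i : ℝ) with hc
  have hcinj : Function.Injective c := by
    intro a b hab
    funext i
    have : ((a i : ℚ) : ℝ) = ((b i : ℚ) : ℝ) := congrFun hab i
    exact_mod_cast this
  intro hmem
  rw [convexHull_eq_union] at hmem
  simp only [Set.mem_iUnion] at hmem
  obtain ⟨t, ht, hai, hxt⟩ := hmem
  -- pull back t to a finset u of rational points
  have ht' : t ⊆ Q.image c := by
    intro y hy
    have := ht hy
    rw [← Finset.coe_image] at this
    exact_mod_cast this
  obtain ⟨u, huQ, hut⟩ := Finset.subset_image_iff.mp ht'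
  -- weights over ℝ
  rw [Finset.convexHull_eq] at hxt
  obtain ⟨w, hw0, hw1, hwc⟩ := hxt
  rw [Finset.centerMass_eq_of_sum_1 _ _ hw1] at hwc
  simp only [id_eq] at hwc
  have hsum_img : ∀ (M : Type) [inst : AddCommMonoid M], ∀ F : (Fin n → ℝ) → M,
      ∑ y ∈ t, F y = ∑ q ∈ u, F (c q) := by
    intro M _ F
    rw [← hut, Finset.sum_image (fun a _ b _ hab => hcinj hab)]
  -- the lifted points in (Option (Fin n)) → ℚ
  set F : (Fin n → ℚ) → (Option (Fin n) → ℚ) := fun q o => o.elim 1 q with hF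
  have hFinj : Function.Injective F := by
    intro a b hab
    funext i
    exact congrFun hab (some i)
  -- real span membership
  have hspan : (fun o => ((F x o : ℚ) : ℝ)) ∈ Submodule.span ℝ
      ((fun (q : Option (Fin n) → ℚ) (o : Option (Fin n)) => (q o : ℝ)) ''
        ((u.image F : Finset (Option (Fin n) → ℚ)) : Set (Option (Fin n) → ℚ))) := by
    have : (fun o => ((F x o : ℚ) : ℝ)) =
        ∑ q ∈ u, w (c q) • (fun o => ((F q o : ℚ) : ℝ)) := by
      funext o
      rw [Finset.sum_apply]
      cases o with
      | none =>
        simp only [hF, Option.elim, Pi.smul_apply, smul_eq_mul]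
        push_cast
        simp only [mul_one]
        rw [← hsum_img _ w]
        exact (hw1).symm
      | some i =>
        simp only [hF, Option.elim, Pi.smul_apply, smul_eq_mul]
        have := congrFun hwc i
        rw [hsum_img _ (fun y => w y • y)] at this
        simp only [Finset.sum_apply, Pi.smul_apply, smul_eq_mul] at this
        exact this.symm
    rw [this]
    refine Submodule.sum_mem _ fun q hq => Submodule.smul_mem _ _ (Submodule.subset_span ?_)
    exact ⟨F q, by simpa using ⟨q, hq, rfl⟩, rfl⟩
  have hratspan := aux_rat_span (u.image F) (F x) hspan
  rw [Submodule.mem_span_finset] at hratspan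
  obtain ⟨d, -, hd⟩ := hratspan
  rw [Finset.sum_image (fun a _ b _ hab => hFinj hab)] at hd
  set d' : (Fin n → ℚ) → ℚ := fun q => d (F q) with hd'
  have hd1 : ∑ q ∈ u, d' q = 1 := by
    have := congrFun hd none
    simpa [hF, Finset.sum_apply] using this
  have hdx : ∀ i, ∑ q ∈ u, d' q * q i = x i := by
    intro i
    have := congrFun hd (some i)
    simpa [hF, Finset.sum_apply] using this
  -- uniqueness of barycentric coordinates
  have hmemt : ∀ q : ↥u, c ↑q ∈ t := by
    rintro ⟨q, hq⟩
    rw [← hut]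
    exact Finset.mem_image_of_mem _ hq
  have hemb : Function.Injective (fun q : ↥u => (⟨c ↑q, hmemt q⟩ : ↥t)) := by
    rintro ⟨a, ha⟩ ⟨b, hb⟩ hab
    have : c a = c b := congrArg Subtype.val hab
    exact Subtype.ext (hcinj this)
  have hai2 : AffineIndependent ℝ (fun q : ↥u => c ↑q) := by
    have := hai.comp_embedding ⟨fun q : ↥u => (⟨c ↑q, hmemt q⟩ : ↥t), hemb⟩
    exact this
  have huniq := (affineIndependent_iff_eq_of_fintype_affineCombination_eq ℝ
      (fun q : ↥u => c ↑q)).mp hai2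
    (fun q => w (c ↑q)) (fun q => ((d' ↑q : ℚ) : ℝ)) ?_ ?_ ?_
  · -- derive nonnegativity of d'
    have hd0 : ∀ q ∈ u, 0 ≤ d' q := by
      intro q hq
      have := congrFun huniq ⟨q, hq⟩
      have h0 : (0:ℝ) ≤ w (c q) := hw0 _ (hmemt ⟨q, hq⟩)
      rw [this] at h0
      exact_mod_cast h0
    apply h
    apply convexHull_mono (show (u : Set (Fin n → ℚ)) ⊆ (Q : Set (Fin n → ℚ)) from by
      exact_mod_cast huQ)
    rw [Finset.convexHull_eq]
    refine ⟨d', hd0, hd1, ?_⟩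
    rw [Finset.centerMass_eq_of_sum_1 _ _ hd1]
    funext i
    simp only [id_eq, Finset.sum_apply, Pi.smul_apply, smul_eq_mul]
    exact hdx i
  · rw [Finset.univ_eq_attach, Finset.sum_attach u (fun q => w (c q)), ← hsum_img _ w]
    exact hw1
  · rw [Finset.univ_eq_attach, Finset.sum_attach u (fun q => ((d' q : ℚ) : ℝ))]
    push_cast
    exact_mod_cast congrArg (fun y : ℚ => (y : ℝ)) hd1
  · rw [Finset.univ.affineCombination_eq_linear_combination _ _ (by
        rw [Finset.univ_eq_attach, Finset.sum_attach u (fun q => w (c q)), ← hsum_img _ w]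
        exact hw1),
      Finset.univ.affineCombination_eq_linear_combination _ _ (by
        rw [Finset.univ_eq_attach, Finset.sum_attach u (fun q => ((d' q : ℚ) : ℝ))]
        exact_mod_cast congrArg (fun y : ℚ => (y : ℝ)) hd1)]
    rw [Finset.univ_eq_attach, Finset.sum_attach u (fun q => w (c q) • c q),
      Finset.sum_attach u (fun q => ((d' q : ℚ) : ℝ) • c q)]
    rw [← hsum_img _ (fun y => w y • y)]
    rw [hwc]
    funext i
    simp only [Finset.sum_apply, Pi.smul_apply, smul_eq_mul, hc]
    have := hdx i
    push_cast
    exact_mod_cast (hdx i).symm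


/-- A `K`-derivation `δ` of `A` is locally nilpotent if for every `a ∈ A`
there exists `n ≥ 1` with `δⁿ a = 0`. -/
def IsLND {K A : Type*} [CommRing K] [CommRing A] [Algebra K A]
    (δ : Derivation K A A) : Prop :=
  ∀ a : A, ∃ n : ℕ, 1 ≤ n ∧ (δ.toLinearMap ^ n) a = 0

def IsLocFin {K A : Type*} [Field K] [CommRing A] [Algebra K A]
    (δ : Derivation K A A) : Prop :=
  ∀ a : A, ∃ V : Submodule K A, a ∈ V ∧ FiniteDimensional K V ∧ ∀ v ∈ V, δ v ∈ V

theorem stmt9 {K A : Type*} [Field K] [CharZero K] [CommRing A] [Algebra K A]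
    (r : ℕ) (hr : 1 ≤ r) (𝒜 : (Fin r → ℤ) → Submodule K A) [GradedAlgebra 𝒜]
    (δ : Derivation K A A) (hlf : IsLocFin δ)
    (S : Finset (Fin r → ℤ)) (δc : (Fin r → ℤ) → Derivation K A A)
    (hsum : δ = ∑ χ ∈ S, δc χ)
    (hnz : ∀ χ ∈ S, δc χ ≠ 0)
    (hhom : ∀ χ ∈ S, ∀ m : Fin r → ℤ, ∀ a ∈ 𝒜 m, (δc χ) a ∈ 𝒜 (m + χ))
    (v : Fin r → ℤ) (hvS : v ∈ S) (hv0 : v ≠ 0)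
    (hext : (fun i => (v i : ℚ)) ∈
      Set.extremePoints ℚ
        (convexHull ℚ ((fun (m : Fin r → ℤ) (i : Fin r) => (m i : ℚ)) '' (S : Set (Fin r → ℤ))))) :
    IsLND (δc v) := by
  classical
  -- Step 1: a separating functional `L`.
  set e : (Fin r → ℤ) → (Fin r → ℚ) := fun m i => (m i : ℚ) with he
  have heinj : Function.Injective e := by
    intro a b hab
    funext i
    have : ((a i : ℤ) : ℚ) = ((b i : ℤ) : ℚ) := congrFun hab i
    exact_mod_cast this
  set Q : Finset (Fin r → ℚ) := (S.erase v).image e with hQdef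
  have hQhull : e v ∉ convexHull ℚ (Q : Set (Fin r → ℚ)) := by
    intro hmem
    have hconv := (convex_convexHull ℚ
      ((fun (m : Fin r → ℤ) (i : Fin r) => (m i : ℚ)) '' (S : Set (Fin r → ℤ)))
        ).mem_extremePoints_iff_mem_diff_convexHull_diff.mp hext
    apply ((Set.mem_diff _).mp hconv).2
    refine convexHull_mono ?_ hmem
    intro y hy
    simp only [hQdef, Finset.coe_image, Set.mem_image, Finset.mem_coe,
      Finset.mem_erase] at hy
    obtain ⟨χ, ⟨hχv, hχS⟩, rfl⟩ := hy
    constructor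
    · exact subset_convexHull ℚ _ ⟨χ, hχS, rfl⟩
    · simp only [Set.mem_singleton_iff]
      exact fun hc => hχv (heinj hc)
  have htrans := aux_hull_transfer Q (e v) hQhull
  have hfin : (((fun (q : Fin r → ℚ) (i : Fin r) => (q i : ℝ)) ''
      (Q : Set (Fin r → ℚ)))).Finite := Q.finite_toSet.image _
  obtain ⟨f, ucut, hflt, hfv⟩ := geometric_hahn_banach_closed_point
    (convex_convexHull ℝ _) (hfin.isCompact_convexHull ℝ).isClosed htrans
  set L : (Fin r → ℤ) → ℝ := fun m => f (fun i => (m i : ℝ)) with hL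
  have Lcast : ∀ m : Fin r → ℤ, (fun i => ((e m) i : ℝ)) = (fun i => ((m i : ℤ) : ℝ)) := by
    intro m; funext i; push_cast; rfl
  have Ladd : ∀ a b : Fin r → ℤ, L (a + b) = L a + L b := by
    intro a b
    have harg : (fun i => (((a + b) i : ℤ) : ℝ)) =
        (fun i => ((a i : ℤ) : ℝ)) + (fun i => ((b i : ℤ) : ℝ)) := by
      funext i; simp only [Pi.add_apply]; push_cast; ring
    rw [hL]; simp only [harg, map_add]
  have Lsub : ∀ a b : Fin r → ℤ, L (a - b) = L a - L b := by
    intro a b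
    have := Ladd (a - b) b
    rw [sub_add_cancel] at this
    linarith
  have Lnsmul : ∀ (n : ℕ) (u : Fin r → ℤ), L (n • u) = n * L u := by
    intro n u
    induction n with
    | zero =>
      have h0 := Ladd 0 0
      simp only [add_zero] at h0
      simpa [zero_nsmul] using by linarith
    | succ n ih =>
      rw [succ_nsmul, Ladd, ih]
      push_cast; ring
  have hsep : ∀ χ ∈ S, χ ≠ v → L χ < L v := by
    intro χ hχ hne
    have h1 : (fun i => ((e χ) i : ℝ)) ∈ convexHull ℝ
        ((fun (q : Fin r → ℚ) (i : Fin r) => (q i : ℝ)) '' (Q : Set (Fin r → ℚ))) := by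
      apply subset_convexHull
      exact ⟨e χ, by
        simp only [hQdef, Finset.coe_image, Set.mem_image, Finset.mem_coe, Finset.mem_erase]
        exact ⟨χ, ⟨hne, hχ⟩, rfl⟩, rfl⟩
    have h2 := (hflt _ h1).trans hfv
    rw [Lcast χ] at h2
    rw [Lcast v] at h2
    exact h2
  -- Step 2: graded projections
  set πL : (Fin r → ℤ) → A →ₗ[K] A := fun k =>
    { toFun := fun x => ((DirectSum.decompose 𝒜 x k : 𝒜 k) : A)
      map_add' := fun x y => by
        simp [DirectSum.decompose_add, DirectSum.add_apply]
      map_smul' := fun cc x => by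
        simp [DirectSum.decompose_smul, DirectSum.smul_apply] } with hπ
  have hp1 : ∀ (i : Fin r → ℤ) (a : A), a ∈ 𝒜 i → πL i a = a := by
    intro i a ha
    exact DirectSum.decompose_of_mem_same 𝒜 ha
  have hp2 : ∀ (i k : Fin r → ℤ) (a : A), a ∈ 𝒜 i → i ≠ k → πL k a = 0 := by
    intro i k a ha hik
    exact DirectSum.decompose_of_mem_ne 𝒜 ha hik
  have key1 : ∀ χ ∈ S, ∀ (k : Fin r → ℤ) (x : A),
      πL k ((δc χ) x) = (δc χ) (πL (k - χ) x) := by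
    intro χ hχ k x
    refine DirectSum.Decomposition.inductionOn 𝒜
      (motive := fun y => πL k ((δc χ) y) = (δc χ) (πL (k - χ) y)) ?_ ?_ ?_ x
    · simp only [map_zero]
    · rintro i ⟨a, ha⟩
      simp only
      have hmem : (δc χ) a ∈ 𝒜 (i + χ) := hhom χ hχ i a ha
      by_cases hik : k = i + χ
      · rw [hik, hp1 _ _ hmem]
        have : i + χ - χ = i := by abel
        rw [this, hp1 _ _ ha]
      · rw [hp2 _ _ _ hmem (fun hc => hik hc.symm)]
        have : i ≠ k - χ := by
          intro hc
          apply hik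
          rw [hc]; abel
        rw [hp2 _ _ _ ha this, map_zero]
    · intro x y hxx hyy
      rw [map_add, map_add, map_add, hxx, hyy, map_add]
  have key2 : ∀ (k : Fin r → ℤ) (x : A),
      πL k (δ x) = ∑ χ ∈ S, (δc χ) (πL (k - χ) x) := by
    intro k x
    have hgen : ∀ (T : Finset (Fin r → ℤ)),
        ((∑ χ ∈ T, δc χ : Derivation K A A)) x = ∑ χ ∈ T, (δc χ) x := by
      intro T
      induction T using Finset.induction_on with
      | empty => simp
      | insert _ _ hni ih => rw [Finset.sum_insert ‹_›, Finset.sum_insert ‹_›,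
          Derivation.add_apply, ih]
    have hδx : δ x = ∑ χ ∈ S, (δc χ) x := by rw [hsum]; exact hgen S
    rw [hδx, map_sum]
    exact Finset.sum_congr rfl fun χ hχ => key1 χ hχ k x
  -- Step 3: main induction
  have main : ∀ (n : ℕ) (m : Fin r → ℤ) (a : A), a ∈ 𝒜 m →
      πL (m + n • v) ((δ.toLinearMap ^ n) a) = ((δc v).toLinearMap ^ n) a ∧
      ∀ k, k ≠ m + n • v → πL k ((δ.toLinearMap ^ n) a) ≠ 0 →
        L k < L m + n * L v := by
    intro n
    induction n with
    | zero =>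
      intro m a ha
      constructor
      · simp only [pow_zero, Module.End.one_apply, zero_nsmul, add_zero]
        exact hp1 m a ha
      · intro k hk hne
        simp only [zero_nsmul, add_zero] at hk
        simp only [pow_zero, Module.End.one_apply] at hne
        exact absurd (hp2 m k a ha (fun h => hk (h ▸ by simp [zero_nsmul]))) hne
    | succ n ih =>
      intro m a ha
      have hx : (δ.toLinearMap ^ (n + 1)) a = δ ((δ.toLinearMap ^ n) a) := by
        rw [pow_succ', Module.End.mul_apply]; rfl
      obtain ⟨ih1, ih2⟩ := ih m a ha
      have hsucc : m + (n + 1) • v - v = m + n • v := by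
        rw [succ_nsmul]; abel
      constructor
      · rw [hx, key2, Finset.sum_eq_single v]
        · rw [hsucc, ih1, pow_succ', Module.End.mul_apply]; rfl
        · intro χ hχ hne
          have hk' : m + (n + 1) • v - χ ≠ m + n • v := by
            intro hcon
            apply hne
            rw [sub_eq_iff_eq_add] at hcon
            have h2 : m + n • v + v = m + n • v + χ := by
              rw [← hcon, succ_nsmul]; abel
            exact (add_left_cancel h2).symm
          by_cases hz : πL (m + (n + 1) • v - χ) ((δ.toLinearMap ^ n) a) = 0
          · rw [hz, map_zero]
          · exfalso
            have hlt := ih2 _ hk' hz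
            have hLχ : L χ < L v := hsep χ hχ hne
            have hval : L (m + (n + 1) • v - χ) = L m + (n + 1) * L v - L χ := by
              rw [Lsub, Ladd, Lnsmul]; push_cast; ring
            rw [hval] at hlt
            linarith
        · intro habs
          exact absurd hvS habs
      · intro k hk hne
        rw [hx, key2] at hne
        obtain ⟨χ, hχ, hχne⟩ := Finset.exists_ne_zero_of_sum_ne_zero hne
        have hπne : πL (k - χ) ((δ.toLinearMap ^ n) a) ≠ 0 := fun h => hχne (by rw [h, map_zero])
        have hLk : L k = L (k - χ) + L χ := by rw [Lsub]; ring
        by_cases hcase : k - χ = m + n • v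
        · have hχv : χ ≠ v := by
            intro hχv
            apply hk
            rw [sub_eq_iff_eq_add] at hcase
            rw [hcase, hχv, succ_nsmul]; abel
          have hvals : L (k - χ) = L m + n * L v := by rw [hcase, Ladd, Lnsmul]
          have hLχ : L χ < L v := hsep χ hχ hχv
          rw [hLk, hvals]; push_cast; linarith
        · have hlt := ih2 _ hcase hπne
          have hLχ : L χ ≤ L v := by
            rcases eq_or_ne χ v with hh | hh
            · rw [hh]
            · exact (hsep χ hχ hh).le
          rw [hLk]; push_cast; linarith
  -- Step 4: conclusion
  have hcomp : ∀ (m : Fin r → ℤ) (b : A), b ∈ 𝒜 m →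
      ∃ N : ℕ, ∀ n ≥ N, ((δc v).toLinearMap ^ n) b = 0 := by
    intro m b hb
    obtain ⟨V, hbV, hfd, hδV⟩ := hlf b
    have hpow : ∀ n : ℕ, (δ.toLinearMap ^ n) b ∈ V := by
      intro n
      induction n with
      | zero => simpa using hbV
      | succ n ihn =>
        rw [pow_succ', Module.End.mul_apply]
        exact hδV _ ihn
    obtain ⟨t, ht⟩ : V.FG := (Submodule.fg_iff_finiteDimensional V).mpr hfd
    set D : Finset (Fin r → ℤ) := t.sup (fun y => (DirectSum.decompose 𝒜 y).support) with hD
    have hmemD : ∀ x ∈ V, ∀ k, πL k x ≠ 0 → k ∈ D := by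
      intro x hxV k hπk
      by_contra hkD
      apply hπk
      rw [← ht, Submodule.mem_span_finset] at hxV
      obtain ⟨g, -, hg⟩ := hxV
      rw [← hg, map_sum]
      refine Finset.sum_eq_zero fun y hy => ?_
      rw [map_smul]
      have hknot : k ∉ (DirectSum.decompose 𝒜 y).support := by
        intro hc
        exact hkD (Finset.le_sup (f := fun y => (DirectSum.decompose 𝒜 y).support) hy hc)
      have hzero : πL k y = 0 := by
        have := DFinsupp.notMem_support_iff.mp hknot
        show ((DirectSum.decompose 𝒜 y k : 𝒜 k) : A) = 0
        rw [this]; rfl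
      rw [hzero, smul_zero]
    obtain ⟨i0, hi0⟩ : ∃ i, v i ≠ 0 := by
      by_contra hcon
      push_neg at hcon
      exact hv0 (funext hcon)
    have hinj : Function.Injective (fun n : ℕ => m + n • v) := by
      intro n1 n2 hsame
      have h1 := congrFun hsame i0
      simp only [Pi.add_apply, Pi.smul_apply] at h1
      have h2 : (n1 : ℤ) * v i0 = (n2 : ℤ) * v i0 := by
        have := add_left_cancel h1
        simpa [nsmul_eq_mul] using this
      have := mul_right_cancel₀ hi0 h2
      exact_mod_cast this
    have hfinset : {n : ℕ | ((δc v).toLinearMap ^ n) b ≠ 0}.Finite := by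
      apply Set.Finite.of_finite_image (f := fun n : ℕ => m + n • v) _ hinj.injOn
      apply Set.Finite.subset D.finite_toSet
      rintro _ ⟨n, hn, rfl⟩
      have h1 : πL (m + n • v) ((δ.toLinearMap ^ n) b) ≠ 0 := by
        rw [(main n m b hb).1]
        exact hn
      exact hmemD _ (hpow n) _ h1
    obtain ⟨N, hN⟩ := hfinset.bddAbove
    refine ⟨N + 1, fun n hn => ?_⟩
    by_contra hne
    have : n ≤ N := hN hne
    omega
  -- assemble over homogeneous components
  intro a
  set supp := (DirectSum.decompose 𝒜 a).support with hsupp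
  have hdec : ∑ i ∈ supp, ((DirectSum.decompose 𝒜 a i : 𝒜 i) : A) = a :=
    DirectSum.sum_support_decompose 𝒜 a
  have hchoice : ∀ i : Fin r → ℤ, ∃ N : ℕ, ∀ n ≥ N,
      ((δc v).toLinearMap ^ n) ((DirectSum.decompose 𝒜 a i : 𝒜 i) : A) = 0 := by
    intro i
    exact hcomp i _ (SetLike.coe_mem _)
  choose N hNs using hchoice
  refine ⟨(supp.sup N) + 1, by omega, ?_⟩
  rw [← hdec, map_sum]
  refine Finset.sum_eq_zero fun i hi => ?_
  exact hNs i _ (by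
    have := Finset.le_sup (f := N) hi
    omega)
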